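/- (Discrete Wigner propagator.) For any unitary matrix U on ℂ^d and any matrix ρ on ℂ^d, the discrete Wigner function of U ρ U† is obtained from that of ρ by the kernel G_W: for all (m',n'), (UρU†)_W(m',n') = Σ_{(m,n) ∈ ZMod d × ZMod d} G_W((m',n'),(m,n)) · ρ_W(m,n), where G_W((m',n'),(m,n)) = (1/d²) Σ_{m̃,ñ ∈ ZMod d} ω^{−2[m̃(n'−n) − ñ(m'−m)]} U_W(m+m̃, n+ñ) · conj(U_W(m'−m̃, n'−ñ)). -/

import Mathlib

open Matrix Complex

noncomputable section

/-- `ω = exp(2πi/d)`, a primitive `d`-th root of unity. -/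
def omega (d : ℕ) : ℂ := Complex.exp (2 * Real.pi * Complex.I / d)

/-- Powers of `ω` with exponent valued in `ZMod d`, evaluated via the canonical
integer representative (well-defined since `ω ^ d = 1`). -/
def wpow (d : ℕ) (x : ZMod d) : ℂ := omega d ^ x.val

/-- The clock matrix `Z`, acting as `Z e_n = ω^n e_n`. -/
def clockZ (d : ℕ) : Matrix (ZMod d) (ZMod d) ℂ :=
  Matrix.diagonal (fun n => wpow d n)

/-- The shift matrix `X`, acting as `X e_n = e_{n+1}`. -/
def shiftX (d : ℕ) : Matrix (ZMod d) (ZMod d) ℂ :=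
  Matrix.of (fun i j => if i = j + 1 then 1 else 0)

/-- The displacement operator `D(k,j) = ω^{-2⁻¹ k j} Z^k X^j`. -/
def Dop (d : ℕ) [NeZero d] (k j : ZMod d) : Matrix (ZMod d) (ZMod d) ℂ :=
  wpow d (-(2⁻¹ * k * j)) • (clockZ d ^ k.val * shiftX d ^ j.val)

/-- The Weyl symbol of a matrix `A`: `Ã(k,j) = Tr(A · D(k,j))`. -/
def weylSymbol (d : ℕ) [NeZero d] (A : Matrix (ZMod d) (ZMod d) ℂ) (k j : ZMod d) : ℂ :=
  Matrix.trace (A * Dop d k j)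

/-- The discrete Wigner function of `ρ`:
`ρ_W(m,n) = (1/d²) Σ_{k,j} Tr(ρ·D(k,j)) ω^{jn−km}`. -/
def wignerFn (d : ℕ) [NeZero d] (ρ : Matrix (ZMod d) (ZMod d) ℂ) (m n : ZMod d) : ℂ :=
  (1 / (d : ℂ) ^ 2) * ∑ k : ZMod d, ∑ j : ZMod d,
    weylSymbol d ρ k j * wpow d (j * n - k * m)

/-- The phase-space symbol of `B`:
`B_W(m,n) = (1/d) Σ_{k,j} Tr(B·D(k,j)) ω^{jn−km}`. -/
def psSymbol (d : ℕ) [NeZero d] (B : Matrix (ZMod d) (ZMod d) ℂ) (m n : ZMod d) : ℂ :=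
  (1 / (d : ℂ)) * ∑ k : ZMod d, ∑ j : ZMod d,
    weylSymbol d B k j * wpow d (j * n - k * m)

/-- The discrete Wigner propagator of a unitary `U`:
`G_W((m',n'),(m,n)) = (1/d²) Σ_{m̃,ñ} ω^{−2[m̃(n'−n) − ñ(m'−m)]}
  U_W(m+m̃, n+ñ) · conj(U_W(m'−m̃, n'−ñ))`. -/
def propG (d : ℕ) [NeZero d] (U : Matrix (ZMod d) (ZMod d) ℂ)
    (μ' μ : ZMod d × ZMod d) : ℂ :=
  (1 / (d : ℂ) ^ 2) * ∑ mt : ZMod d, ∑ nt : ZMod d,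
    wpow d (-(2 * (mt * (μ'.2 - μ.2) - nt * (μ'.1 - μ.1)))) *
      psSymbol d U (μ.1 + mt) (μ.2 + nt) *
      (starRingEnd ℂ) (psSymbol d U (μ'.1 - mt) (μ'.2 - nt))

variable (d : ℕ) [NeZero d]

lemma omega_pow_d : omega d ^ d = 1 := by
  have := Complex.isPrimitiveRoot_exp d (NeZero.ne d)
  exact this.pow_eq_one

lemma omega_pow_eq_one_iff (n : ℕ) : omega d ^ n = 1 ↔ d ∣ n := by
  have := Complex.isPrimitiveRoot_exp d (NeZero.ne d)
  exact this.pow_eq_one_iff_dvd n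

lemma wpow_natCast (n : ℕ) : wpow d (n : ZMod d) = omega d ^ n := by
  unfold wpow
  rw [ZMod.val_natCast]
  conv_rhs => rw [← Nat.mod_add_div n d, pow_add, pow_mul, omega_pow_d, one_pow, mul_one]

lemma wpow_zero : wpow d 0 = 1 := by
  have := wpow_natCast d 0
  simpa using this

lemma wpow_add (x y : ZMod d) : wpow d (x + y) = wpow d x * wpow d y := by
  have : x + y = (((x.val + y.val : ℕ)) : ZMod d) := by
    push_cast [ZMod.natCast_val, ZMod.cast_id]
    rfl
  rw [this, wpow_natCast, pow_add]
  rfl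

lemma wpow_ne_zero (x : ZMod d) : wpow d x ≠ 0 := by
  unfold wpow omega
  exact pow_ne_zero _ (Complex.exp_ne_zero _)

lemma wpow_neg (x : ZMod d) : wpow d (-x) = (wpow d x)⁻¹ := by
  have h : wpow d x * wpow d (-x) = 1 := by
    rw [← wpow_add]; simp [wpow_zero]
  field_simp [wpow_ne_zero] at h ⊢
  linear_combination h

lemma wpow_sub (x y : ZMod d) : wpow d (x - y) = wpow d x * (wpow d y)⁻¹ := by
  rw [sub_eq_add_neg, wpow_add, wpow_neg]

lemma conj_wpow (x : ZMod d) : (starRingEnd ℂ) (wpow d x) = wpow d (-x) := by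
  have habs : ‖omega d‖ = 1 := by
    unfold omega
    have : 2 * (Real.pi : ℂ) * Complex.I / d = ((2 * Real.pi / d : ℝ) : ℂ) * Complex.I := by
      push_cast; ring
    rw [this, Complex.norm_exp_ofReal_mul_I]
  have h2 : ‖wpow d x‖ = 1 := by
    unfold wpow; rw [norm_pow, habs, one_pow]
  have h3 : wpow d x * (starRingEnd ℂ) (wpow d x) = 1 := by
    rw [Complex.mul_conj]
    rw [Complex.normSq_eq_norm_sq, h2]; norm_num
  rw [wpow_neg]
  field_simp [wpow_ne_zero] at h3 ⊢
  linear_combination h3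

lemma wpow_eq_one_iff (x : ZMod d) : wpow d x = 1 ↔ x = 0 := by
  unfold wpow
  rw [omega_pow_eq_one_iff]
  constructor
  · intro h
    have hlt := ZMod.val_lt x
    have h0 : x.val = 0 := Nat.eq_zero_of_dvd_of_lt h hlt
    exact (ZMod.val_eq_zero x).mp h0
  · intro h; subst h; simp [ZMod.val_zero]


set_option linter.unusedSectionVars false

lemma sum_wpow (c : ZMod d) :
    ∑ x : ZMod d, wpow d (c * x) = if c = 0 then (d : ℂ) else 0 := by
  by_cases hc : c = 0
  · subst hc
    simp [wpow_zero, Finset.card_univ, ZMod.card]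
  · rw [if_neg hc]
    set S := ∑ x : ZMod d, wpow d (c * x) with hS
    have key : wpow d c * S = S := by
      rw [hS, Finset.mul_sum]
      calc ∑ x : ZMod d, wpow d c * wpow d (c * x)
          = ∑ x : ZMod d, wpow d (c * (x + 1)) := by
            apply Finset.sum_congr rfl; intro x _
            rw [← wpow_add]; ring_nf
        _ = ∑ y : ZMod d, wpow d (c * y) := by
            exact Fintype.sum_equiv (Equiv.addRight (1 : ZMod d))
              (fun x => wpow d (c * (x + 1))) (fun y => wpow d (c * y)) (fun x => rfl)
    have hne : wpow d c ≠ 1 := fun h => hc ((wpow_eq_one_iff d c).mp h)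
    have : (wpow d c - 1) * S = 0 := by linear_combination key
    rcases mul_eq_zero.mp this with h | h
    · exact absurd (by linear_combination h) hne
    · exact h





lemma wpow_pow (x : ZMod d) (t : ℕ) : wpow d x ^ t = wpow d (x * t) := by
  have : x * (t : ZMod d) = ((x.val * t : ℕ) : ZMod d) := by
    push_cast [ZMod.natCast_val, ZMod.cast_id]; rfl
  rw [this, wpow_natCast, pow_mul]
  rfl

lemma natCast_val_cast (x : ZMod d) : ((x.val : ℕ) : ZMod d) = x := by
  push_cast [ZMod.natCast_val, ZMod.cast_id]; rfl

lemma clockZ_pow_apply (t : ℕ) (a b : ZMod d) :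
    ((clockZ d) ^ t) a b = if a = b then wpow d (a * t) else 0 := by
  rw [clockZ, Matrix.diagonal_pow]
  by_cases h : a = b
  · subst h; simp [Matrix.diagonal_apply_eq, wpow_pow]
  · simp [Matrix.diagonal_apply_ne _ h, h]

lemma shiftX_pow_apply (t : ℕ) (a b : ZMod d) :
    ((shiftX d) ^ t) a b = if a = b + (t : ZMod d) then 1 else 0 := by
  induction t generalizing a b with
  | zero => simp [Matrix.one_apply]
  | succ n ih =>
    rw [pow_succ, Matrix.mul_apply]
    rw [Finset.sum_eq_single (b + 1)]
    · have hX : shiftX d (b + 1) b = 1 := by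
        simp [shiftX]
      rw [hX, mul_one, ih]
      have : b + 1 + (n : ZMod d) = b + ((n + 1 : ℕ) : ZMod d) := by push_cast; ring
      rw [this]
    · intro c _ hc
      have hX : shiftX d c b = 0 := by
        simp only [shiftX, Matrix.of_apply]
        rw [if_neg hc]
      rw [hX, mul_zero]
    · intro h; exact absurd (Finset.mem_univ _) h

lemma Dop_apply (k j b a : ZMod d) :
    Dop d k j b a = if b = a + j then wpow d (-(2⁻¹ * k * j) + b * k) else 0 := by
  rw [Dop, Matrix.smul_apply, Matrix.mul_apply]
  rw [Finset.sum_eq_single b]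
  · rw [clockZ_pow_apply, if_pos rfl, shiftX_pow_apply, natCast_val_cast, natCast_val_cast]
    by_cases h : b = a + j
    · rw [if_pos h, if_pos h, mul_one, smul_eq_mul, ← wpow_add]
    · rw [if_neg h, if_neg h, mul_zero, smul_zero]
  · intro c _ hc
    rw [clockZ_pow_apply, if_neg (Ne.symm hc), zero_mul]
  · intro h; exact absurd (Finset.mem_univ _) h

lemma weylSymbol_eq (h2 : (2 : ZMod d) * 2⁻¹ = 1) (B : Matrix (ZMod d) (ZMod d) ℂ)
    (k j : ZMod d) :
    weylSymbol d B k j = ∑ a : ZMod d, B a (a + j) * wpow d (k * a + 2⁻¹ * k * j) := by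
  rw [weylSymbol, Matrix.trace]
  apply Finset.sum_congr rfl
  intro a _
  rw [Matrix.diag_apply, Matrix.mul_apply]
  rw [Finset.sum_eq_single (a + j)]
  · rw [Dop_apply, if_pos rfl]
    congr 1
    apply congrArg
    linear_combination (-(k * j)) * h2
  · intro c _ hc
    rw [Dop_apply, if_neg hc, mul_zero]
  · intro h; exact absurd (Finset.mem_univ _) h



/-- The doubling equivalence of `ZMod d`. -/
def dbl (d : ℕ) [NeZero d] (h2 : (2 : ZMod d) * 2⁻¹ = 1) : ZMod d ≃ ZMod d where
  toFun s := 2 * s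
  invFun s := 2⁻¹ * s
  left_inv s := by change 2⁻¹ * (2 * s) = s; linear_combination s * h2
  right_inv s := by change 2 * (2⁻¹ * s) = s; linear_combination s * h2

lemma sum_wpow' (c : ZMod d) :
    ∑ x : ZMod d, wpow d (x * c) = if c = 0 then (d : ℂ) else 0 := by
  rw [← sum_wpow]
  apply Finset.sum_congr rfl; intro x _; rw [mul_comm]

lemma core_sum_eq (h2 : (2 : ZMod d) * 2⁻¹ = 1) (ρ : Matrix (ZMod d) (ZMod d) ℂ)
    (m n : ZMod d) :
    (∑ k : ZMod d, ∑ j : ZMod d, weylSymbol d ρ k j * wpow d (j * n - k * m)) =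
      (∑ s : ZMod d, ρ (m - s) (m + s) * wpow d (2 * s * n)) * (d : ℂ) := by
  calc (∑ k : ZMod d, ∑ j : ZMod d, weylSymbol d ρ k j * wpow d (j * n - k * m))
      = ∑ k : ZMod d, ∑ j : ZMod d, ∑ a : ZMod d,
          ρ a (a + j) * wpow d (j * n) * wpow d (k * (a + 2⁻¹ * j - m)) := by
        apply Finset.sum_congr rfl; intro k _
        apply Finset.sum_congr rfl; intro j _
        rw [weylSymbol_eq d h2, Finset.sum_mul]
        apply Finset.sum_congr rfl; intro a _
        have hw : wpow d (k * a + 2⁻¹ * k * j) * wpow d (j * n - k * m)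
            = wpow d (j * n) * wpow d (k * (a + 2⁻¹ * j - m)) := by
          rw [← wpow_add, ← wpow_add]; congr 1; ring
        calc ρ a (a + j) * wpow d (k * a + 2⁻¹ * k * j) * wpow d (j * n - k * m)
            = ρ a (a + j) * (wpow d (k * a + 2⁻¹ * k * j) * wpow d (j * n - k * m)) := by ring
          _ = ρ a (a + j) * (wpow d (j * n) * wpow d (k * (a + 2⁻¹ * j - m))) := by rw [hw]
          _ = ρ a (a + j) * wpow d (j * n) * wpow d (k * (a + 2⁻¹ * j - m)) := by ring
    _ = ∑ j : ZMod d, ∑ a : ZMod d, ∑ k : ZMod d,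
          ρ a (a + j) * wpow d (j * n) * wpow d (k * (a + 2⁻¹ * j - m)) := by
        rw [Finset.sum_comm]
        apply Finset.sum_congr rfl; intro j _
        rw [Finset.sum_comm]
    _ = ∑ j : ZMod d, ∑ a : ZMod d,
          ρ a (a + j) * wpow d (j * n) *
            (if a + 2⁻¹ * j - m = 0 then (d : ℂ) else 0) := by
        apply Finset.sum_congr rfl; intro j _
        apply Finset.sum_congr rfl; intro a _
        rw [← Finset.mul_sum, sum_wpow']
    _ = ∑ j : ZMod d, ρ (m - 2⁻¹ * j) (m + 2⁻¹ * j) * wpow d (j * n) * (d : ℂ) := by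
        apply Finset.sum_congr rfl; intro j _
        have hcond : ∀ a : ZMod d, (a + 2⁻¹ * j - m = 0) ↔ (a = m - 2⁻¹ * j) :=
          fun a => ⟨fun h => by linear_combination h, fun h => by linear_combination h⟩
        simp only [hcond, mul_ite, mul_zero]
        rw [Finset.sum_ite_eq' Finset.univ (m - 2⁻¹ * j)
          (fun a => ρ a (a + j) * wpow d (j * n) * (d : ℂ))]
        rw [if_pos (Finset.mem_univ _)]
        have hj : m - 2⁻¹ * j + j = m + 2⁻¹ * j := by linear_combination (-j) * h2
        rw [hj]
    _ = ∑ s : ZMod d, ρ (m - s) (m + s) * wpow d (2 * s * n) * (d : ℂ) := by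
        apply Fintype.sum_equiv (dbl d h2).symm
          (fun j => ρ (m - 2⁻¹ * j) (m + 2⁻¹ * j) * wpow d (j * n) * (d : ℂ))
          (fun s => ρ (m - s) (m + s) * wpow d (2 * s * n) * (d : ℂ))
        intro j
        show ρ (m - 2⁻¹ * j) (m + 2⁻¹ * j) * wpow d (j * n) * (d : ℂ)
          = ρ (m - 2⁻¹ * j) (m + 2⁻¹ * j) * wpow d (2 * (2⁻¹ * j) * n) * (d : ℂ)
        have he : (2 : ZMod d) * (2⁻¹ * j) * n = j * n := by
          linear_combination j * n * h2
        rw [he]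
    _ = (∑ s : ZMod d, ρ (m - s) (m + s) * wpow d (2 * s * n)) * (d : ℂ) := by
        rw [Finset.sum_mul]

lemma wignerFn_eq (h2 : (2 : ZMod d) * 2⁻¹ = 1) (ρ : Matrix (ZMod d) (ZMod d) ℂ)
    (m n : ZMod d) :
    wignerFn d ρ m n = (1 / (d : ℂ)) * ∑ s : ZMod d, ρ (m - s) (m + s) * wpow d (2 * s * n) := by
  have hd0 : (d : ℂ) ≠ 0 := Nat.cast_ne_zero.mpr (NeZero.ne d)
  rw [wignerFn, core_sum_eq d h2]
  field_simp

lemma psSymbol_eq (h2 : (2 : ZMod d) * 2⁻¹ = 1) (B : Matrix (ZMod d) (ZMod d) ℂ)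
    (m n : ZMod d) :
    psSymbol d B m n = ∑ s : ZMod d, B (m - s) (m + s) * wpow d (2 * s * n) := by
  have hd0 : (d : ℂ) ≠ 0 := Nat.cast_ne_zero.mpr (NeZero.ne d)
  rw [psSymbol, core_sum_eq d h2]
  field_simp

lemma entry_UρU (U ρ : Matrix (ZMod d) (ZMod d) ℂ) (x y : ZMod d) :
    (U * ρ * Uᴴ) x y = ∑ a : ZMod d, ∑ b : ZMod d,
      U x a * ρ a b * (starRingEnd ℂ) (U y b) := by
  rw [Matrix.mul_apply]
  rw [Finset.sum_comm]
  apply Finset.sum_congr rfl; intro b _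
  rw [Matrix.conjTranspose_apply, Matrix.mul_apply, Finset.sum_mul]
  apply Finset.sum_congr rfl; intro a _
  rfl

lemma lhs_norm (h2 : (2 : ZMod d) * 2⁻¹ = 1) (U ρ : Matrix (ZMod d) (ZMod d) ℂ)
    (m' n' : ZMod d) :
    wignerFn d (U * ρ * Uᴴ) m' n' =
      (1 / (d : ℂ)) * ∑ c : ZMod d, ∑ a : ZMod d, ∑ b : ZMod d,
        wpow d (2 * (m' - c) * n') * (U c a * ρ a b * (starRingEnd ℂ) (U (2 * m' - c) b)) := by
  rw [wignerFn_eq d h2]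
  congr 1
  calc ∑ s : ZMod d, (U * ρ * Uᴴ) (m' - s) (m' + s) * wpow d (2 * s * n')
      = ∑ c : ZMod d, (U * ρ * Uᴴ) c (2 * m' - c) * wpow d (2 * (m' - c) * n') := by
        apply Fintype.sum_equiv (Equiv.subLeft m')
          (fun s => (U * ρ * Uᴴ) (m' - s) (m' + s) * wpow d (2 * s * n'))
          (fun c => (U * ρ * Uᴴ) c (2 * m' - c) * wpow d (2 * (m' - c) * n'))
        intro s
        show (U * ρ * Uᴴ) (m' - s) (m' + s) * wpow d (2 * s * n')
          = (U * ρ * Uᴴ) (m' - s) (2 * m' - (m' - s)) * wpow d (2 * (m' - (m' - s)) * n')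
        have e1 : 2 * m' - (m' - s) = m' + s := by ring
        have e2 : (2 : ZMod d) * (m' - (m' - s)) * n' = 2 * s * n' := by ring
        rw [e1, e2]
    _ = ∑ c : ZMod d, ∑ a : ZMod d, ∑ b : ZMod d,
        wpow d (2 * (m' - c) * n') * (U c a * ρ a b * (starRingEnd ℂ) (U (2 * m' - c) b)) := by
        apply Finset.sum_congr rfl; intro c _
        rw [entry_UρU, Finset.sum_mul]
        apply Finset.sum_congr rfl; intro a _
        rw [Finset.sum_mul]
        apply Finset.sum_congr rfl; intro b _
        ring

lemma sum6_reorder (f : ZMod d → ZMod d → ZMod d → ZMod d → ZMod d → ZMod d → ℂ) :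
    (∑ n : ZMod d, ∑ mt : ZMod d, ∑ nt : ZMod d, ∑ s : ZMod d, ∑ t : ZMod d, ∑ u : ZMod d,
      f n mt nt s t u)
  = ∑ mt : ZMod d, ∑ u : ZMod d, ∑ t : ZMod d, ∑ nt : ZMod d, ∑ s : ZMod d, ∑ n : ZMod d,
      f n mt nt s t u := by
  rw [show (∑ n : ZMod d, ∑ mt : ZMod d, ∑ nt : ZMod d, ∑ s : ZMod d, ∑ t : ZMod d,
      ∑ u : ZMod d, f n mt nt s t u)
    = ∑ x : ZMod d × ZMod d × ZMod d × ZMod d × ZMod d × ZMod d,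
        f x.1 x.2.1 x.2.2.1 x.2.2.2.1 x.2.2.2.2.1 x.2.2.2.2.2 by
      simp [Fintype.sum_prod_type]]
  rw [show (∑ mt : ZMod d, ∑ u : ZMod d, ∑ t : ZMod d, ∑ nt : ZMod d, ∑ s : ZMod d,
      ∑ n : ZMod d, f n mt nt s t u)
    = ∑ y : ZMod d × ZMod d × ZMod d × ZMod d × ZMod d × ZMod d,
        f y.2.2.2.2.2 y.1 y.2.2.2.1 y.2.2.2.2.1 y.2.2.1 y.2.1 by
      simp [Fintype.sum_prod_type]]
  exact Fintype.sum_equiv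
    (Equiv.mk
      (fun x : ZMod d × ZMod d × ZMod d × ZMod d × ZMod d × ZMod d =>
        (x.2.1, x.2.2.2.2.2, x.2.2.2.2.1, x.2.2.1, x.2.2.2.1, x.1))
      (fun y => (y.2.2.2.2.2, y.1, y.2.2.2.1, y.2.2.2.2.1, y.2.2.1, y.2.1))
      (fun x => rfl) (fun y => rfl))
    _ _ (fun x => rfl)


lemma key_m (h2 : (2 : ZMod d) * 2⁻¹ = 1) (U ρ : Matrix (ZMod d) (ZMod d) ℂ)
    (m' n' m : ZMod d) :
    ∑ n : ZMod d, propG d U (m', n') (m, n) * wignerFn d ρ m n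
  = (1 / (d : ℂ)) * ∑ mt : ZMod d, ∑ u : ZMod d,
      U (m + 2 * mt + u) (m - u) *
        (starRingEnd ℂ) (U (2 * m' - (m + 2 * mt + u)) (m + u)) *
        ρ (m - u) (m + u) * wpow d (2 * (m' - (m + 2 * mt + u)) * n') := by
  calc ∑ n : ZMod d, propG d U (m', n') (m, n) * wignerFn d ρ m n
      = ∑ n : ZMod d,
          ((1 / (d : ℂ) ^ 2) * ∑ mt : ZMod d, ∑ nt : ZMod d, ∑ s : ZMod d, ∑ t : ZMod d,
            wpow d (-(2 * (mt * (n' - n) - nt * (m' - m)))) *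
              (U (m + mt - s) (m + mt + s) * wpow d (2 * s * (n + nt))) *
              ((starRingEnd ℂ) (U (m' - mt - t) (m' - mt + t)) * wpow d (-(2 * t * (n' - nt))))) *
          ((1 / (d : ℂ)) * ∑ u : ZMod d, ρ (m - u) (m + u) * wpow d (2 * u * n)) := by
        apply Finset.sum_congr rfl; intro n _
        congr 1
        · show propG d U (m', n') (m, n) = _
          rw [propG]
          congr 1
          apply Finset.sum_congr rfl; intro mt _
          apply Finset.sum_congr rfl; intro nt _
          show wpow d (-(2 * (mt * (n' - n) - nt * (m' - m)))) *
              psSymbol d U (m + mt) (n + nt) *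
              (starRingEnd ℂ) (psSymbol d U (m' - mt) (n' - nt)) = _
          rw [psSymbol_eq d h2, psSymbol_eq d h2, map_sum]
          have hc : (∑ t : ZMod d,
              (starRingEnd ℂ) (U (m' - mt - t) (m' - mt + t) * wpow d (2 * t * (n' - nt))))
            = ∑ t : ZMod d,
              (starRingEnd ℂ) (U (m' - mt - t) (m' - mt + t)) * wpow d (-(2 * t * (n' - nt))) := by
            apply Finset.sum_congr rfl; intro t _
            rw [_root_.map_mul, conj_wpow]
          rw [hc, mul_assoc, Finset.sum_mul_sum, Finset.mul_sum]
          apply Finset.sum_congr rfl; intro s _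
          rw [Finset.mul_sum]
          apply Finset.sum_congr rfl; intro t _
          ring
        · exact wignerFn_eq d h2 ρ m n
    _ = (1 / (d : ℂ) ^ 3) * ∑ n : ZMod d, ∑ mt : ZMod d, ∑ nt : ZMod d, ∑ s : ZMod d,
          ∑ t : ZMod d, ∑ u : ZMod d,
          U (m + mt - s) (m + mt + s) * (starRingEnd ℂ) (U (m' - mt - t) (m' - mt + t)) *
            ρ (m - u) (m + u) *
            wpow d (-(2 * (mt * (n' - n) - nt * (m' - m))) + 2 * s * (n + nt) +
              -(2 * t * (n' - nt)) + 2 * u * n) := by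
        rw [Finset.mul_sum]
        apply Finset.sum_congr rfl; intro n _
        rw [show ∀ A B : ℂ, ((1 / (d : ℂ) ^ 2) * A) * ((1 / (d : ℂ)) * B)
            = (1 / (d : ℂ) ^ 3) * (A * B) from fun A B => by ring]
        congr 1
        rw [Finset.sum_mul]
        apply Finset.sum_congr rfl; intro mt _
        rw [Finset.sum_mul]
        apply Finset.sum_congr rfl; intro nt _
        rw [Finset.sum_mul]
        apply Finset.sum_congr rfl; intro s _
        rw [Finset.sum_mul]
        apply Finset.sum_congr rfl; intro t _
        rw [Finset.mul_sum]
        apply Finset.sum_congr rfl; intro u _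
        have hw : wpow d (-(2 * (mt * (n' - n) - nt * (m' - m)))) * wpow d (2 * s * (n + nt)) *
            wpow d (-(2 * t * (n' - nt))) * wpow d (2 * u * n)
          = wpow d (-(2 * (mt * (n' - n) - nt * (m' - m))) + 2 * s * (n + nt) +
              -(2 * t * (n' - nt)) + 2 * u * n) := by
          rw [← wpow_add, ← wpow_add, ← wpow_add]
        linear_combination (U (m + mt - s) (m + mt + s) *
          (starRingEnd ℂ) (U (m' - mt - t) (m' - mt + t)) * ρ (m - u) (m + u)) * hw
    _ = (1 / (d : ℂ) ^ 3) * ∑ mt : ZMod d, ∑ u : ZMod d, ∑ t : ZMod d, ∑ nt : ZMod d,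
          ∑ s : ZMod d, ∑ n : ZMod d,
          U (m + mt - s) (m + mt + s) * (starRingEnd ℂ) (U (m' - mt - t) (m' - mt + t)) *
            ρ (m - u) (m + u) *
            wpow d (-(2 * (mt * (n' - n) - nt * (m' - m))) + 2 * s * (n + nt) +
              -(2 * t * (n' - nt)) + 2 * u * n) := by
        rw [sum6_reorder]
    _ = (1 / (d : ℂ) ^ 3) * ∑ mt : ZMod d, ∑ u : ZMod d, ∑ t : ZMod d, ∑ nt : ZMod d,
          ∑ s : ZMod d,
          (U (m + mt - s) (m + mt + s) * (starRingEnd ℂ) (U (m' - mt - t) (m' - mt + t)) *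
            ρ (m - u) (m + u) *
            wpow d (-(2 * (mt * n' - nt * (m' - m))) + 2 * s * nt + -(2 * t * (n' - nt)))) *
          (if 2 * (mt + s + u) = 0 then (d : ℂ) else 0) := by
        congr 1
        apply Finset.sum_congr rfl; intro mt _
        apply Finset.sum_congr rfl; intro u _
        apply Finset.sum_congr rfl; intro t _
        apply Finset.sum_congr rfl; intro nt _
        apply Finset.sum_congr rfl; intro s _
        calc (∑ n : ZMod d,
              U (m + mt - s) (m + mt + s) * (starRingEnd ℂ) (U (m' - mt - t) (m' - mt + t)) *
                ρ (m - u) (m + u) *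
                wpow d (-(2 * (mt * (n' - n) - nt * (m' - m))) + 2 * s * (n + nt) +
                  -(2 * t * (n' - nt)) + 2 * u * n))
            = ∑ n : ZMod d,
              (U (m + mt - s) (m + mt + s) * (starRingEnd ℂ) (U (m' - mt - t) (m' - mt + t)) *
                ρ (m - u) (m + u) *
                wpow d (-(2 * (mt * n' - nt * (m' - m))) + 2 * s * nt + -(2 * t * (n' - nt)))) *
                wpow d (n * (2 * (mt + s + u))) := by
              apply Finset.sum_congr rfl; intro n _
              have hsplit : wpow d (-(2 * (mt * n' - nt * (m' - m))) + 2 * s * nt +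
                  -(2 * t * (n' - nt))) * wpow d (n * (2 * (mt + s + u)))
                = wpow d (-(2 * (mt * (n' - n) - nt * (m' - m))) + 2 * s * (n + nt) +
                  -(2 * t * (n' - nt)) + 2 * u * n) := by
                rw [← wpow_add]; congr 1; ring
              linear_combination (U (m + mt - s) (m + mt + s) *
                (starRingEnd ℂ) (U (m' - mt - t) (m' - mt + t)) * ρ (m - u) (m + u)) * (- hsplit)
          _ = (U (m + mt - s) (m + mt + s) * (starRingEnd ℂ) (U (m' - mt - t) (m' - mt + t)) *
                ρ (m - u) (m + u) *
                wpow d (-(2 * (mt * n' - nt * (m' - m))) + 2 * s * nt + -(2 * t * (n' - nt)))) *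
              (if 2 * (mt + s + u) = 0 then (d : ℂ) else 0) := by
              rw [← Finset.mul_sum, sum_wpow']
    _ = (1 / (d : ℂ) ^ 3) * ∑ mt : ZMod d, ∑ u : ZMod d, ∑ t : ZMod d, ∑ nt : ZMod d,
          (U (m + mt - (-mt - u)) (m + mt + (-mt - u)) *
            (starRingEnd ℂ) (U (m' - mt - t) (m' - mt + t)) * ρ (m - u) (m + u) *
            wpow d (-(2 * (mt * n' - nt * (m' - m))) + 2 * (-mt - u) * nt +
              -(2 * t * (n' - nt)))) * (d : ℂ) := by
        congr 1
        apply Finset.sum_congr rfl; intro mt _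
        apply Finset.sum_congr rfl; intro u _
        apply Finset.sum_congr rfl; intro t _
        apply Finset.sum_congr rfl; intro nt _
        have hcond : ∀ s : ZMod d, (2 * (mt + s + u) = (0 : ZMod d)) ↔ (s = -mt - u) :=
          fun s => ⟨fun h => by linear_combination 2⁻¹ * h - (mt + s + u) * h2,
            fun h => by linear_combination 2 * h⟩
        simp only [hcond, mul_ite, mul_zero]
        rw [Finset.sum_ite_eq' Finset.univ (-mt - u)]
        rw [if_pos (Finset.mem_univ _)]
    _ = (1 / (d : ℂ) ^ 3) * ∑ mt : ZMod d, ∑ u : ZMod d, ∑ t : ZMod d,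
          ((U (m + mt - (-mt - u)) (m + mt + (-mt - u)) *
            (starRingEnd ℂ) (U (m' - mt - t) (m' - mt + t)) * ρ (m - u) (m + u) *
            wpow d (-(2 * (mt * n')) + -(2 * (t * n')))) *
            (if 2 * (m' - m + -mt - u + t) = 0 then (d : ℂ) else 0)) * (d : ℂ) := by
        congr 1
        apply Finset.sum_congr rfl; intro mt _
        apply Finset.sum_congr rfl; intro u _
        apply Finset.sum_congr rfl; intro t _
        rw [← Finset.sum_mul]
        congr 1
        calc (∑ nt : ZMod d,
              U (m + mt - (-mt - u)) (m + mt + (-mt - u)) *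
                (starRingEnd ℂ) (U (m' - mt - t) (m' - mt + t)) * ρ (m - u) (m + u) *
                wpow d (-(2 * (mt * n' - nt * (m' - m))) + 2 * (-mt - u) * nt +
                  -(2 * t * (n' - nt))))
            = ∑ nt : ZMod d,
              (U (m + mt - (-mt - u)) (m + mt + (-mt - u)) *
                (starRingEnd ℂ) (U (m' - mt - t) (m' - mt + t)) * ρ (m - u) (m + u) *
                wpow d (-(2 * (mt * n')) + -(2 * (t * n')))) *
                wpow d (nt * (2 * (m' - m + -mt - u + t))) := by
              apply Finset.sum_congr rfl; intro nt _
              have hsplit : wpow d (-(2 * (mt * n')) + -(2 * (t * n'))) *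
                  wpow d (nt * (2 * (m' - m + -mt - u + t)))
                = wpow d (-(2 * (mt * n' - nt * (m' - m))) + 2 * (-mt - u) * nt +
                  -(2 * t * (n' - nt))) := by
                rw [← wpow_add]; congr 1; ring
              linear_combination (U (m + mt - (-mt - u)) (m + mt + (-mt - u)) *
                (starRingEnd ℂ) (U (m' - mt - t) (m' - mt + t)) * ρ (m - u) (m + u)) * (- hsplit)
          _ = (U (m + mt - (-mt - u)) (m + mt + (-mt - u)) *
                (starRingEnd ℂ) (U (m' - mt - t) (m' - mt + t)) * ρ (m - u) (m + u) *
                wpow d (-(2 * (mt * n')) + -(2 * (t * n')))) *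
              (if 2 * (m' - m + -mt - u + t) = 0 then (d : ℂ) else 0) := by
              rw [← Finset.mul_sum, sum_wpow']
    _ = (1 / (d : ℂ) ^ 3) * ∑ mt : ZMod d, ∑ u : ZMod d,
          ((U (m + mt - (-mt - u)) (m + mt + (-mt - u)) *
            (starRingEnd ℂ) (U (m' - mt - (m - m' + mt + u)) (m' - mt + (m - m' + mt + u))) *
            ρ (m - u) (m + u) *
            wpow d (-(2 * (mt * n')) + -(2 * ((m - m' + mt + u) * n')))) * (d : ℂ)) * (d : ℂ) := by
        congr 1
        apply Finset.sum_congr rfl; intro mt _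
        apply Finset.sum_congr rfl; intro u _
        have hcond : ∀ t : ZMod d,
            (2 * (m' - m + -mt - u + t) = (0 : ZMod d)) ↔ (t = m - m' + mt + u) :=
          fun t => ⟨fun h => by linear_combination 2⁻¹ * h - (m' - m + -mt - u + t) * h2,
            fun h => by linear_combination 2 * h⟩
        simp only [hcond, mul_ite, mul_zero, ite_mul, zero_mul]
        rw [Finset.sum_ite_eq' Finset.univ (m - m' + mt + u)]
        rw [if_pos (Finset.mem_univ _)]
    _ = (1 / (d : ℂ)) * ∑ mt : ZMod d, ∑ u : ZMod d,
          U (m + 2 * mt + u) (m - u) *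
            (starRingEnd ℂ) (U (2 * m' - (m + 2 * mt + u)) (m + u)) *
            ρ (m - u) (m + u) * wpow d (2 * (m' - (m + 2 * mt + u)) * n') := by
        have hd0 : (d : ℂ) ≠ 0 := Nat.cast_ne_zero.mpr (NeZero.ne d)
        have hterm : ∀ mt u : ZMod d,
            ((U (m + mt - (-mt - u)) (m + mt + (-mt - u)) *
              (starRingEnd ℂ) (U (m' - mt - (m - m' + mt + u)) (m' - mt + (m - m' + mt + u))) *
              ρ (m - u) (m + u) *
              wpow d (-(2 * (mt * n')) + -(2 * ((m - m' + mt + u) * n')))) * (d : ℂ)) * (d : ℂ)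
            = (U (m + 2 * mt + u) (m - u) *
              (starRingEnd ℂ) (U (2 * m' - (m + 2 * mt + u)) (m + u)) *
              ρ (m - u) (m + u) * wpow d (2 * (m' - (m + 2 * mt + u)) * n')) * ((d : ℂ) * d) := by
          intro mt u
          have i1 : m + mt - (-mt - u) = m + 2 * mt + u := by ring
          have i2 : m + mt + (-mt - u) = m - u := by ring
          have i3 : m' - mt - (m - m' + mt + u) = 2 * m' - (m + 2 * mt + u) := by ring
          have i4 : m' - mt + (m - m' + mt + u) = m + u := by ring
          have i5 : -(2 * (mt * n')) + -(2 * ((m - m' + mt + u) * n'))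
              = 2 * (m' - (m + 2 * mt + u)) * n' := by ring
          rw [i1, i2, i3, i4, i5]; ring
        calc (1 / (d : ℂ) ^ 3) * ∑ mt : ZMod d, ∑ u : ZMod d,
              ((U (m + mt - (-mt - u)) (m + mt + (-mt - u)) *
                (starRingEnd ℂ) (U (m' - mt - (m - m' + mt + u)) (m' - mt + (m - m' + mt + u))) *
                ρ (m - u) (m + u) *
                wpow d (-(2 * (mt * n')) + -(2 * ((m - m' + mt + u) * n')))) * (d : ℂ)) * (d : ℂ)
            = (1 / (d : ℂ) ^ 3) * ((∑ mt : ZMod d, ∑ u : ZMod d,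
                U (m + 2 * mt + u) (m - u) *
                  (starRingEnd ℂ) (U (2 * m' - (m + 2 * mt + u)) (m + u)) *
                  ρ (m - u) (m + u) * wpow d (2 * (m' - (m + 2 * mt + u)) * n')) * ((d : ℂ) * d)) := by
              congr 1
              calc (∑ mt : ZMod d, ∑ u : ZMod d,
                    ((U (m + mt - (-mt - u)) (m + mt + (-mt - u)) *
                      (starRingEnd ℂ) (U (m' - mt - (m - m' + mt + u)) (m' - mt + (m - m' + mt + u))) *
                      ρ (m - u) (m + u) *
                      wpow d (-(2 * (mt * n')) + -(2 * ((m - m' + mt + u) * n')))) * (d : ℂ)) * (d : ℂ))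
                  = ∑ mt : ZMod d, ∑ u : ZMod d,
                    (U (m + 2 * mt + u) (m - u) *
                      (starRingEnd ℂ) (U (2 * m' - (m + 2 * mt + u)) (m + u)) *
                      ρ (m - u) (m + u) * wpow d (2 * (m' - (m + 2 * mt + u)) * n')) * ((d : ℂ) * d) := by
                    apply Finset.sum_congr rfl; intro mt _
                    apply Finset.sum_congr rfl; intro u _
                    exact hterm mt u
                _ = ∑ mt : ZMod d, (∑ u : ZMod d,
                    U (m + 2 * mt + u) (m - u) *
                      (starRingEnd ℂ) (U (2 * m' - (m + 2 * mt + u)) (m + u)) *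
                      ρ (m - u) (m + u) * wpow d (2 * (m' - (m + 2 * mt + u)) * n')) * ((d : ℂ) * d) := by
                    apply Finset.sum_congr rfl; intro mt _
                    rw [← Finset.sum_mul]
                _ = (∑ mt : ZMod d, ∑ u : ZMod d,
                    U (m + 2 * mt + u) (m - u) *
                      (starRingEnd ℂ) (U (2 * m' - (m + 2 * mt + u)) (m + u)) *
                      ρ (m - u) (m + u) * wpow d (2 * (m' - (m + 2 * mt + u)) * n')) * ((d : ℂ) * d) := by
                    rw [← Finset.sum_mul]
          _ = (1 / (d : ℂ)) * ∑ mt : ZMod d, ∑ u : ZMod d,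
              U (m + 2 * mt + u) (m - u) *
                (starRingEnd ℂ) (U (2 * m' - (m + 2 * mt + u)) (m + u)) *
                ρ (m - u) (m + u) * wpow d (2 * (m' - (m + 2 * mt + u)) * n') := by
              field_simp

lemma sum3_reorder (f : ZMod d → ZMod d → ZMod d → ℂ) :
    (∑ m : ZMod d, ∑ u : ZMod d, ∑ c : ZMod d, f m u c)
  = ∑ c : ZMod d, ∑ m : ZMod d, ∑ u : ZMod d, f m u c := by
  rw [show (∑ m : ZMod d, ∑ u : ZMod d, ∑ c : ZMod d, f m u c)
    = ∑ x : ZMod d × ZMod d × ZMod d, f x.1 x.2.1 x.2.2 by simp [Fintype.sum_prod_type]]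
  rw [show (∑ c : ZMod d, ∑ m : ZMod d, ∑ u : ZMod d, f m u c)
    = ∑ y : ZMod d × ZMod d × ZMod d, f y.2.1 y.2.2 y.1 by simp [Fintype.sum_prod_type]]
  exact Fintype.sum_equiv
    (Equiv.mk (fun x : ZMod d × ZMod d × ZMod d => (x.2.2, x.1, x.2.1))
      (fun y => (y.2.1, y.2.2, y.1)) (fun x => rfl) (fun y => rfl))
    _ _ (fun x => rfl)

lemma sum_pair_reindex (h2 : (2 : ZMod d) * 2⁻¹ = 1) (H : ZMod d → ZMod d → ℂ) :
    (∑ m : ZMod d, ∑ u : ZMod d, H (m - u) (m + u)) = ∑ a : ZMod d, ∑ b : ZMod d, H a b := by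
  rw [show (∑ m : ZMod d, ∑ u : ZMod d, H (m - u) (m + u))
    = ∑ x : ZMod d × ZMod d, H (x.1 - x.2) (x.1 + x.2) by simp [Fintype.sum_prod_type]]
  rw [show (∑ a : ZMod d, ∑ b : ZMod d, H a b)
    = ∑ y : ZMod d × ZMod d, H y.1 y.2 by simp [Fintype.sum_prod_type]]
  exact Fintype.sum_equiv
    (Equiv.mk (fun x : ZMod d × ZMod d => (x.1 - x.2, x.1 + x.2))
      (fun y => (2⁻¹ * (y.1 + y.2), 2⁻¹ * (y.2 - y.1)))
      (fun x => by
        apply Prod.ext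
        · show 2⁻¹ * ((x.1 - x.2) + (x.1 + x.2)) = x.1; linear_combination x.1 * h2
        · show 2⁻¹ * ((x.1 + x.2) - (x.1 - x.2)) = x.2; linear_combination x.2 * h2)
      (fun y => by
        apply Prod.ext
        · show 2⁻¹ * (y.1 + y.2) - 2⁻¹ * (y.2 - y.1) = y.1; linear_combination y.1 * h2
        · show 2⁻¹ * (y.1 + y.2) + 2⁻¹ * (y.2 - y.1) = y.2; linear_combination y.2 * h2))
    _ _ (fun x => rfl)

theorem discrete_wigner_propagator
    (d : ℕ) [NeZero d] (hd : Nat.Prime d) (hodd : Odd d)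
    (U : Matrix (ZMod d) (ZMod d) ℂ) (hU : U ∈ Matrix.unitaryGroup (ZMod d) ℂ)
    (ρ : Matrix (ZMod d) (ZMod d) ℂ) (m' n' : ZMod d) :
    wignerFn d (U * ρ * Uᴴ) m' n' =
      ∑ m : ZMod d, ∑ n : ZMod d, propG d U (m', n') (m, n) * wignerFn d ρ m n := by
  have hd2 : d ≠ 2 := by
    rintro rfl
    exact (Nat.not_odd_iff_even.mpr (by norm_num)) hodd
  have h20 : (2 : ZMod d) ≠ 0 := by
    intro h
    rw [show (2 : ZMod d) = ((2 : ℕ) : ZMod d) by norm_num] at h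
    exact hd2 ((Nat.prime_dvd_prime_iff_eq hd Nat.prime_two).mp
      ((CharP.cast_eq_zero_iff (ZMod d) d 2).mp h))
  haveI : Fact (Nat.Prime d) := ⟨hd⟩
  have h2 : (2 : ZMod d) * 2⁻¹ = 1 := mul_inv_cancel₀ h20
  rw [lhs_norm d h2]
  calc (1 / (d : ℂ)) * ∑ c : ZMod d, ∑ a : ZMod d, ∑ b : ZMod d,
        wpow d (2 * (m' - c) * n') * (U c a * ρ a b * (starRingEnd ℂ) (U (2 * m' - c) b))
      = (1 / (d : ℂ)) * ∑ m : ZMod d, ∑ mt : ZMod d, ∑ u : ZMod d,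
        U (m + 2 * mt + u) (m - u) *
          (starRingEnd ℂ) (U (2 * m' - (m + 2 * mt + u)) (m + u)) *
          ρ (m - u) (m + u) * wpow d (2 * (m' - (m + 2 * mt + u)) * n') := by
        congr 1
        calc (∑ c : ZMod d, ∑ a : ZMod d, ∑ b : ZMod d,
              wpow d (2 * (m' - c) * n') * (U c a * ρ a b * (starRingEnd ℂ) (U (2 * m' - c) b)))
            = ∑ c : ZMod d, ∑ m : ZMod d, ∑ u : ZMod d,
              wpow d (2 * (m' - c) * n') *
                (U c (m - u) * ρ (m - u) (m + u) * (starRingEnd ℂ) (U (2 * m' - c) (m + u))) := by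
              apply Finset.sum_congr rfl; intro c _
              rw [← sum_pair_reindex d h2
                (fun a b => wpow d (2 * (m' - c) * n') *
                  (U c a * ρ a b * (starRingEnd ℂ) (U (2 * m' - c) b)))]
          _ = ∑ m : ZMod d, ∑ u : ZMod d, ∑ c : ZMod d,
              wpow d (2 * (m' - c) * n') *
                (U c (m - u) * ρ (m - u) (m + u) * (starRingEnd ℂ) (U (2 * m' - c) (m + u))) := by
              rw [← sum3_reorder d
                (fun m u c => wpow d (2 * (m' - c) * n') *
                  (U c (m - u) * ρ (m - u) (m + u) * (starRingEnd ℂ) (U (2 * m' - c) (m + u))))]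
          _ = ∑ m : ZMod d, ∑ u : ZMod d, ∑ mt : ZMod d,
              wpow d (2 * (m' - (m + 2 * mt + u)) * n') *
                (U (m + 2 * mt + u) (m - u) * ρ (m - u) (m + u) *
                  (starRingEnd ℂ) (U (2 * m' - (m + 2 * mt + u)) (m + u))) := by
              apply Finset.sum_congr rfl; intro m _
              apply Finset.sum_congr rfl; intro u _
              exact (Fintype.sum_equiv
                (Equiv.mk (fun mt : ZMod d => m + 2 * mt + u)
                  (fun c => 2⁻¹ * (c - m - u))
                  (fun mt => by
                    show 2⁻¹ * ((m + 2 * mt + u) - m - u) = mt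
                    linear_combination mt * h2)
                  (fun c => by
                    show m + 2 * (2⁻¹ * (c - m - u)) + u = c
                    linear_combination (c - m - u) * h2))
                (fun mt => wpow d (2 * (m' - (m + 2 * mt + u)) * n') *
                  (U (m + 2 * mt + u) (m - u) * ρ (m - u) (m + u) *
                    (starRingEnd ℂ) (U (2 * m' - (m + 2 * mt + u)) (m + u))))
                (fun c => wpow d (2 * (m' - c) * n') *
                  (U c (m - u) * ρ (m - u) (m + u) *
                    (starRingEnd ℂ) (U (2 * m' - c) (m + u))))
                (fun mt => rfl)).symm
          _ = ∑ m : ZMod d, ∑ mt : ZMod d, ∑ u : ZMod d,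
              U (m + 2 * mt + u) (m - u) *
                (starRingEnd ℂ) (U (2 * m' - (m + 2 * mt + u)) (m + u)) *
                ρ (m - u) (m + u) * wpow d (2 * (m' - (m + 2 * mt + u)) * n') := by
              apply Finset.sum_congr rfl; intro m _
              rw [Finset.sum_comm]
              apply Finset.sum_congr rfl; intro mt _
              apply Finset.sum_congr rfl; intro u _
              ring
    _ = ∑ m : ZMod d, (1 / (d : ℂ)) * ∑ mt : ZMod d, ∑ u : ZMod d,
        U (m + 2 * mt + u) (m - u) *
          (starRingEnd ℂ) (U (2 * m' - (m + 2 * mt + u)) (m + u)) *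
          ρ (m - u) (m + u) * wpow d (2 * (m' - (m + 2 * mt + u)) * n') := by
        rw [Finset.mul_sum]
    _ = ∑ m : ZMod d, ∑ n : ZMod d, propG d U (m', n') (m, n) * wignerFn d ρ m n := by
        apply Finset.sum_congr rfl; intro m _
        exact (key_m d h2 U ρ m' n' m).symm
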